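/- Suppose l ≡ m² ≡ k₃ ≡ 1 (mod 8) are integers, e ∈ ℤ, and κ₁, ν ∈ ℤ[√2] satisfy lm² + 2(1+√2)k₃e² = κ₁ν² with ν of odd norm. Then κ₁ is congruent to a unit times a square modulo 8 in ℤ[√2]; concretely κ₁ν² ≡ 1 or (1+√2)² (mod 8ℤ[√2]), and consequently the norm k₁ = Nκ₁ satisfies k₁ ≡ 1 (mod 16). -/

import Mathlib

/-- If `l ≡ m² ≡ k₃ ≡ 1 (mod 8)` and `lm² + 2(1+√2)k₃e² = κ₁ν²` in `ℤ[√2]` with `ν` of odd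
norm, then `κ₁ν² ≡ 1` or `(1+√2)² (mod 8)`, and the norm `k₁ = Nκ₁` satisfies
`k₁ ≡ 1 (mod 16)`. -/
theorem stmt13 (l m k₃ e : ℤ) (hl : l % 8 = 1) (hm : m ^ 2 % 8 = 1) (hk : k₃ % 8 = 1)
    (κ₁ ν : Zsqrtd 2) (hν : Odd ν.norm)
    (heq : ((l * m ^ 2 : ℤ) : Zsqrtd 2) + 2 * (⟨1, 1⟩ : Zsqrtd 2) * (k₃ : Zsqrtd 2) *
      ((e : Zsqrtd 2)) ^ 2 = κ₁ * ν ^ 2) :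
    ((8 : Zsqrtd 2) ∣ κ₁ * ν ^ 2 - 1 ∨
        (8 : Zsqrtd 2) ∣ κ₁ * ν ^ 2 - (⟨1, 1⟩ : Zsqrtd 2) ^ 2) ∧
      κ₁.norm % 16 = 1 := by
  -- helper: n ∣ a - b gives a ≡ b
  have mdvd : ∀ (n a b : ℤ), n ∣ a - b → a ≡ b [ZMOD n] := by
    intro n a b h
    obtain ⟨c, hc⟩ := h
    exact Int.modEq_iff_dvd.mpr ⟨-c, by linarith⟩
  -- squares mod 8
  have sqmod : ∀ z : ℤ, z ^ 2 ≡ 0 [ZMOD 8] ∨ z ^ 2 ≡ 1 [ZMOD 8] ∨ z ^ 2 ≡ 4 [ZMOD 8] := by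
    intro z
    have h : ∀ t : ZMod 8, t ^ 2 = 0 ∨ t ^ 2 = 1 ∨ t ^ 2 = 4 := by decide
    rcases h (z : ZMod 8) with h' | h' | h' <;>
      [left; (right; left); (right; right)] <;>
      · exact (ZMod.intCast_eq_intCast_iff _ _ _).mp (by push_cast; exact h')
  have oddsq : ∀ z : ℤ, Odd z → z ^ 2 ≡ 1 [ZMOD 8] := by
    intro z ⟨c, hc⟩
    rcases Int.even_or_odd c with ⟨d, hd⟩ | ⟨d, hd⟩
    · exact mdvd 8 _ _ ⟨2 * (d * d) + d, by rw [hc, hd]; ring⟩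
    · exact mdvd 8 _ _ ⟨2 * (d * d) + 3 * d + 1, by rw [hc, hd]; ring⟩
  have hre : (κ₁ * ν ^ 2).re = l * m ^ 2 + 2 * k₃ * e ^ 2 := by
    rw [← heq]; simp [pow_two, Zsqrtd.re_mul, Zsqrtd.im_mul]
  have him : (κ₁ * ν ^ 2).im = 2 * k₃ * e ^ 2 := by
    rw [← heq]; simp [pow_two, Zsqrtd.re_mul, Zsqrtd.im_mul]
  have hL : l * m ^ 2 ≡ 1 [ZMOD 8] := by
    have h1 : l ≡ 1 [ZMOD 8] := by unfold Int.ModEq; omega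
    have h2 : m ^ 2 ≡ 1 [ZMOD 8] := by unfold Int.ModEq; omega
    simpa using h1.mul h2
  have hK : k₃ ≡ 1 [ZMOD 8] := by unfold Int.ModEq; omega
  have key : ∀ r : ℤ, e ^ 2 ≡ r [ZMOD 8] → 2 * k₃ * e ^ 2 ≡ 2 * r [ZMOD 8] := by
    intro r hE
    calc 2 * k₃ * e ^ 2 = 2 * (k₃ * e ^ 2) := by ring
    _ ≡ 2 * (1 * r) [ZMOD 8] := (Int.ModEq.refl 2).mul (hK.mul hE)
    _ = 2 * r := by ring
  have dvd8 : ∀ a b : Zsqrtd 2, 8 ∣ a.re - b.re → 8 ∣ a.im - b.im → (8 : Zsqrtd 2) ∣ a - b := by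
    intro a b h1 h2
    have : ((8 : ℤ) : Zsqrtd 2) ∣ a - b := by
      rw [Zsqrtd.intCast_dvd]
      constructor <;> simpa
    simpa using this
  -- norm computation
  have hnormx : (κ₁ * ν ^ 2).norm
      = (l * m ^ 2) ^ 2 + 4 * (k₃ * e ^ 2) * (l * m ^ 2 - k₃ * e ^ 2) := by
    rw [Zsqrtd.norm_def, hre, him]; ring
  have hLd : (8 : ℤ) ∣ l * m ^ 2 - 1 := hL.symm.dvd
  have hL2 : (16 : ℤ) ∣ (l * m ^ 2) ^ 2 - 1 := by
    obtain ⟨s, hs⟩ := hLd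
    exact ⟨4 * (s * s) + s, by rw [show l * m ^ 2 = 8 * s + 1 by linarith]; ring⟩
  have hmid : (16 : ℤ) ∣ 4 * (k₃ * e ^ 2) * (l * m ^ 2 - k₃ * e ^ 2) := by
    rcases sqmod e with h | h | h
    · obtain ⟨c, hc⟩ : (8 : ℤ) ∣ e ^ 2 := by simpa using h.symm.dvd
      exact ⟨2 * k₃ * c * (l * m ^ 2 - k₃ * e ^ 2), by rw [hc]; ring⟩
    · have h2 : l * m ^ 2 - k₃ * e ^ 2 ≡ 1 - 1 * 1 [ZMOD 8] := hL.sub (hK.mul h)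
      obtain ⟨s, hs⟩ : (8 : ℤ) ∣ l * m ^ 2 - k₃ * e ^ 2 := by simpa using h2.symm.dvd
      exact ⟨2 * (k₃ * e ^ 2) * s, by rw [show l * m ^ 2 - k₃ * e ^ 2 = 8 * s by linarith]; ring⟩
    · obtain ⟨c, hc⟩ : (4 : ℤ) ∣ e ^ 2 - 4 := by
        have := h.symm.dvd
        obtain ⟨c, hc⟩ := this
        exact ⟨2 * c, by linarith⟩
      exact ⟨k₃ * c * (l * m ^ 2 - k₃ * e ^ 2) + (k₃ * (l * m ^ 2 - k₃ * e ^ 2)),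
        by rw [show (e:ℤ) ^ 2 = 4 * c + 4 by linarith]; ring⟩
  have hx16 : (κ₁ * ν ^ 2).norm ≡ 1 [ZMOD 16] := by
    rw [hnormx]
    obtain ⟨s, hs⟩ := hL2
    obtain ⟨t, ht⟩ := hmid
    exact mdvd 16 _ _ ⟨s + t, by linarith⟩
  -- ν has norm ≡ ±1 mod 8, so ν.norm² ≡ 1 mod 16
  have hnre : Odd ν.re := by
    by_contra h
    rw [Int.not_odd_iff_even] at h
    obtain ⟨c, hc⟩ := h
    exact (Int.not_odd_iff_even.mpr ⟨c * c + c * c - ν.im * ν.im,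
      by rw [Zsqrtd.norm_def, hc]; ring⟩) hν
  have hν8 : ν.norm ≡ 1 [ZMOD 8] ∨ ν.norm ≡ -1 [ZMOD 8] := by
    have h1 := oddsq ν.re hnre
    have h2 := sqmod ν.im
    have hn : ν.norm = ν.re ^ 2 - 2 * ν.im ^ 2 := by rw [Zsqrtd.norm_def]; ring
    rcases h2 with h | h | h
    · left; rw [hn]
      calc ν.re ^ 2 - 2 * ν.im ^ 2 ≡ 1 - 2 * 0 [ZMOD 8] := h1.sub ((Int.ModEq.refl 2).mul h)
      _ = 1 := by ring
    · right; rw [hn]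
      calc ν.re ^ 2 - 2 * ν.im ^ 2 ≡ 1 - 2 * 1 [ZMOD 8] := h1.sub ((Int.ModEq.refl 2).mul h)
      _ = -1 := by ring
    · left; rw [hn]
      have : ν.re ^ 2 - 2 * ν.im ^ 2 ≡ 1 - 2 * 4 [ZMOD 8] := h1.sub ((Int.ModEq.refl 2).mul h)
      exact this.trans (by decide)
  have hν16 : ν.norm ^ 2 ≡ 1 [ZMOD 16] := by
    rcases hν8 with h | h
    · obtain ⟨s, hs⟩ := h.symm.dvd
      exact mdvd 16 _ _ ⟨4 * (s * s) + s, by rw [show ν.norm = 8 * s + 1 by linarith]; ring⟩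
    · obtain ⟨s, hs⟩ := h.symm.dvd
      exact mdvd 16 _ _ ⟨4 * (s * s) - s, by rw [show ν.norm = 8 * s - 1 by linarith]; ring⟩
  have hsplit : (κ₁ * ν ^ 2).norm = κ₁.norm * ν.norm ^ 2 := by
    rw [Zsqrtd.norm_mul, sq, Zsqrtd.norm_mul, sq]
  have hfin : κ₁.norm % 16 = 1 := by
    have h3 : κ₁.norm ≡ 1 [ZMOD 16] := by
      calc κ₁.norm = κ₁.norm * 1 := by ring
      _ ≡ κ₁.norm * ν.norm ^ 2 [ZMOD 16] := ((Int.ModEq.refl _).mul hν16).symm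
      _ = (κ₁ * ν ^ 2).norm := hsplit.symm
      _ ≡ 1 [ZMOD 16] := hx16
    unfold Int.ModEq at h3; omega
  refine ⟨?_, hfin⟩
  have h32re : ((⟨1, 1⟩ : Zsqrtd 2) ^ 2).re = 3 := by simp [pow_two, Zsqrtd.re_mul]
  have h32im : ((⟨1, 1⟩ : Zsqrtd 2) ^ 2).im = 2 := by simp [pow_two, Zsqrtd.im_mul]
  rcases sqmod e with h | h | h
  · left
    have hT : (8 : ℤ) ∣ 2 * k₃ * e ^ 2 := by simpa using (key 0 h).symm.dvd
    refine dvd8 _ 1 ?_ ?_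
    · rw [hre]
      simp only [Zsqrtd.re_one]
      have : l * m ^ 2 + 2 * k₃ * e ^ 2 - 1 = (l * m ^ 2 - 1) + 2 * k₃ * e ^ 2 := by ring
      rw [this]; exact dvd_add hLd hT
    · rw [him]; simpa using hT
  · right
    have hT : (8 : ℤ) ∣ 2 * k₃ * e ^ 2 - 2 := by simpa using (key 1 h).symm.dvd
    refine dvd8 _ _ ?_ ?_
    · rw [hre, h32re]
      have : l * m ^ 2 + 2 * k₃ * e ^ 2 - 3 = (l * m ^ 2 - 1) + (2 * k₃ * e ^ 2 - 2) := by ring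
      rw [this]; exact dvd_add hLd hT
    · rw [him, h32im]; exact hT
  · left
    have hT : (8 : ℤ) ∣ 2 * k₃ * e ^ 2 - 8 := by simpa using (key 4 h).symm.dvd
    have hT' : (8 : ℤ) ∣ 2 * k₃ * e ^ 2 := by
      have : 2 * k₃ * e ^ 2 = (2 * k₃ * e ^ 2 - 8) + 8 := by ring
      rw [this]; exact dvd_add hT ⟨1, rfl⟩
    refine dvd8 _ 1 ?_ ?_
    · rw [hre]
      simp only [Zsqrtd.re_one]
      have : l * m ^ 2 + 2 * k₃ * e ^ 2 - 1 = (l * m ^ 2 - 1) + 2 * k₃ * e ^ 2 := by ring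
      rw [this]; exact dvd_add hLd hT'
    · rw [him]; simpa using hT'
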